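/- For every integer r ≥ 0, the following identity holds in the polynomial ring ℤ[t]: (1 + t)^r · Σ_{k=0}^{2r} (−1)^k a_k t^k = Σ_{k=0}^{r} R_k · C(r, k) · (1 + t³)^{r−k} · (t + t²)^k, where a_{2k} = C(r, k)², a_{2k+1} = C(r, k)·C(r, k+1), and R_k = Σ_{i=0}^{k} (−1)^{k−i} C(k, i) c_i is the k-th Riordan number (c_i being the i-th Catalan number). -/
import Mathlib


open Polynomial Finset

-- catalan as difference of binomials
lemma catalan_eq_choose_sub (n : ℕ) :
    (catalan n : ℤ) = ((2*n).choose n : ℤ) - ((2*n).choose (n+1) : ℤ) := by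
  have h1 : (n + 1) * catalan n = (2*n).choose n := by
    have := succ_mul_catalan_eq_centralBinom n
    rwa [Nat.centralBinom] at this
  have h2 : (2*n).choose (n+1) * (n+1) = (2*n).choose n * n := by
    have := Nat.choose_succ_right_eq (2*n) n
    rwa [show 2*n - n = n by omega] at this
  have hz : ((n:ℤ) + 1) ≠ 0 := by positivity
  apply mul_left_cancel₀ hz
  have h1' : ((n:ℤ) + 1) * (catalan n : ℤ) = ((2*n).choose n : ℤ) := by exact_mod_cast h1
  have h2' : ((2*n).choose (n+1) : ℤ) * ((n:ℤ)+1) = ((2*n).choose n : ℤ) * n := by exact_mod_cast h2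
  rw [h1']
  nlinarith [h2']

-- parity split
lemma sum_range_two_mul_add_one {M : Type*} [AddCommMonoid M] (f : ℕ → M) (r : ℕ) :
    ∑ k ∈ range (2*r+1), f k
      = (∑ m ∈ range (r+1), f (2*m)) + ∑ n ∈ range r, f (2*n+1) := by
  induction r with
  | zero => simp
  | succ r ih =>
      rw [show 2*(r+1)+1 = (2*r+1)+1+1 by ring, Finset.sum_range_succ, Finset.sum_range_succ, ih,
        Finset.sum_range_succ (fun m => f (2*m)) (r+1), Finset.sum_range_succ (fun n => f (2*n+1)) r]
      ring_nf
      abel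

-- coeff of (X-1)^n
lemma coeff_X_sub_one_pow (n k : ℕ) :
    ((X - 1 : Polynomial ℤ)^n).coeff k = (-1)^(n-k) * (n.choose k : ℤ) := by
  have : (X - 1 : Polynomial ℤ) = X + C (-1) := by simp [sub_eq_add_neg]
  rw [this, coeff_X_add_C_pow]

lemma wpow_coeff (k : ℕ) :
    ((X^2 - X + 1 : Polynomial ℤ)^k).coeff k + ((X^2 - X + 1 : Polynomial ℤ)^k).coeff (k+1)
      = ∑ i ∈ range (k+1), (-1:ℤ)^i * (k.choose i : ℤ) * (catalan i : ℤ) := by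
  have hw : (X^2 - X + 1 : Polynomial ℤ) = (X - 1)^2 + X := by ring
  rw [hw, add_pow]
  rw [finset_sum_coeff, finset_sum_coeff, ← Finset.sum_add_distrib]
  apply Finset.sum_congr rfl
  intro i hi
  have hik : i ≤ k := by simpa [Nat.lt_succ_iff] using hi
  have hterm : ∀ d : ℕ,
      ((((X-1:Polynomial ℤ))^2)^i * X^(k-i) * ((k.choose i : ℕ) : Polynomial ℤ)).coeff d
        = ((X-1:Polynomial ℤ)^(2*i) * X^(k-i)).coeff d * (k.choose i : ℤ) := by
    intro d
    rw [← Polynomial.C_eq_natCast, coeff_mul_C, ← pow_mul]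
  rw [hterm, hterm]
  have c1 : ((X-1:Polynomial ℤ)^(2*i) * X^(k-i)).coeff k = (-1:ℤ)^i * ((2*i).choose i : ℤ) := by
    have h := coeff_mul_X_pow ((X-1:Polynomial ℤ)^(2*i)) (k-i) i
    rw [show i + (k-i) = k from Nat.add_sub_cancel' hik] at h
    rw [h, coeff_X_sub_one_pow, show 2*i - i = i by omega]
  have c2 : ((X-1:Polynomial ℤ)^(2*i) * X^(k-i)).coeff (k+1)
      = (-1:ℤ)^(2*i-(i+1)) * ((2*i).choose (i+1) : ℤ) := by
    have h := coeff_mul_X_pow ((X-1:Polynomial ℤ)^(2*i)) (k-i) (i+1)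
    rw [show i + 1 + (k-i) = k + 1 by omega] at h
    rw [h, coeff_X_sub_one_pow]
  rw [c1, c2, catalan_eq_choose_sub]
  rcases Nat.eq_zero_or_pos i with h0 | h1
  · subst h0; simp
  · obtain ⟨j, rfl⟩ : ∃ j, i = j + 1 := ⟨i - 1, by omega⟩
    rw [show 2*(j+1) - (j+1+1) = j by omega]
    have : (-1:ℤ)^j = -(-1:ℤ)^(j+1) := by rw [pow_succ]; ring
    rw [this]; ring

noncomputable def Gpoly (r : ℕ) : Polynomial (Polynomial ℤ) :=
  ((1 - C (X : Polynomial ℤ) * X) * (X - C (X : Polynomial ℤ)))^r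

lemma E2 (r : ℕ) :
    (Gpoly r).coeff r + (Gpoly r).coeff (r+1)
      = ∑ k ∈ range (r+1),
          C ((∑ i ∈ range (k+1), (-1:ℤ)^(k-i) * (k.choose i : ℤ) * (catalan i : ℤ))
              * (r.choose k : ℤ))
            * (1 - X + X^2 : Polynomial ℤ)^(r-k) * X^k := by
  have hfac : ((1 - C (X:Polynomial ℤ) * X) * (X - C (X:Polynomial ℤ)) : Polynomial (Polynomial ℤ))
      = C (-X : Polynomial ℤ) * ((X:Polynomial (Polynomial ℤ))^2 - X + 1)
        + C (1 - X + X^2 : Polynomial ℤ) * X := by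
    simp only [map_sub, map_add, map_neg, map_pow, map_one]
    ring
  have hW : ((X:Polynomial (Polynomial ℤ))^2 - X + 1)
      = (X^2 - X + 1 : Polynomial ℤ).map (Polynomial.C : ℤ →+* Polynomial ℤ) := by
    simp [Polynomial.map_add, Polynomial.map_sub, Polynomial.map_pow]
  rw [Gpoly, hfac, add_pow, finset_sum_coeff, finset_sum_coeff, ← Finset.sum_add_distrib]
  apply Finset.sum_congr rfl
  intro k hk
  have hkr : k ≤ r := by simpa [Nat.lt_succ_iff] using hk
  set W : Polynomial (Polynomial ℤ) := ((X:Polynomial (Polynomial ℤ))^2 - X + 1) with hWdef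
  have hterm : (C (-X:Polynomial ℤ) * W)^k * (C (1 - X + X^2 : Polynomial ℤ) * X)^(r-k)
        * ((r.choose k : ℕ) : Polynomial (Polynomial ℤ))
      = C ((-X)^k * (1 - X + X^2 : Polynomial ℤ)^(r-k) * ((r.choose k : ℕ) : Polynomial ℤ))
          * (X^(r-k) * W^k) := by
    simp only [mul_pow, map_mul, map_pow, map_natCast]
    ring
  rw [hterm]
  have hc1 : (X^(r-k) * W^k).coeff r = (W^k).coeff k := by
    have h := coeff_X_pow_mul (W^k) (r-k) k
    rwa [show k + (r-k) = r from Nat.add_sub_cancel' hkr] at h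
  have hc2 : (X^(r-k) * W^k).coeff (r+1) = (W^k).coeff (k+1) := by
    have h := coeff_X_pow_mul (W^k) (r-k) (k+1)
    rwa [show k + 1 + (r-k) = r + 1 by omega] at h
  have hWc : ∀ j, (W^k).coeff j = C (((X^2 - X + 1 : Polynomial ℤ)^k).coeff j) := by
    intro j
    rw [hW, ← Polynomial.map_pow, Polynomial.coeff_map]
  rw [coeff_C_mul, coeff_C_mul, hc1, hc2, ← mul_add, hWc, hWc, ← map_add, wpow_coeff]
  have hsign : (∑ i ∈ range (k+1), (-1:ℤ)^(k-i) * (k.choose i : ℤ) * (catalan i : ℤ))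
      = (-1:ℤ)^k * ∑ i ∈ range (k+1), (-1:ℤ)^i * (k.choose i : ℤ) * (catalan i : ℤ) := by
    rw [Finset.mul_sum]
    apply Finset.sum_congr rfl
    intro i hi
    have hik : i ≤ k := by simpa [Nat.lt_succ_iff] using hi
    have : (-1:ℤ)^(k-i) = (-1:ℤ)^k * (-1:ℤ)^i := by
      rw [← pow_add, show k + i = (k - i) + 2*i by omega, pow_add, pow_mul]
      simp
    rw [this]; ring
  rw [hsign]
  have hnX : ((-X : Polynomial ℤ))^k = (-1)^k * X^k := by
    rw [neg_pow]
  rw [hnX]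
  simp only [map_mul, map_pow, map_neg, map_one, map_natCast]
  ring

lemma E1 (r : ℕ) :
    (Gpoly r).coeff r + (Gpoly r).coeff (r+1)
      = (∑ m ∈ range (r+1), C ((r.choose m : ℤ)^2) * X^(2*m))
        - ∑ n ∈ range r, C ((r.choose n : ℤ) * (r.choose (n+1) : ℤ)) * X^(2*n+1) := by
  have hre1 : (1 - C (X:Polynomial ℤ) * X : Polynomial (Polynomial ℤ))
      = C (-X : Polynomial ℤ) * X + 1 := by rw [map_neg]; ring
  have h1 : (1 - C (X:Polynomial ℤ) * X : Polynomial (Polynomial ℤ))^r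
      = ∑ m ∈ range (r+1), C ((-X)^m * ((r.choose m : ℕ) : Polynomial ℤ)) * X^m := by
    rw [hre1, add_pow]
    apply Finset.sum_congr rfl
    intro m _
    rw [one_pow, mul_one]
    simp only [mul_pow, map_mul, map_pow, map_natCast]
    ring
  have hre2 : (X - C (X:Polynomial ℤ) : Polynomial (Polynomial ℤ))
      = X + C (-X : Polynomial ℤ) := by rw [map_neg]; ring
  have h2 : (X - C (X:Polynomial ℤ) : Polynomial (Polynomial ℤ))^r
      = ∑ n ∈ range (r+1), C ((-X)^(r-n) * ((r.choose n : ℕ) : Polynomial ℤ)) * X^n := by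
    rw [hre2, add_pow]
    apply Finset.sum_congr rfl
    intro n _
    simp only [map_mul, map_pow, map_natCast]
    ring
  have hcoeff : ∀ N : ℕ, r ≤ N →
      (Gpoly r).coeff N
        = ∑ m ∈ range (r+1), (if N - m ∈ range (r+1) then
            ((-X:Polynomial ℤ)^m * ((r.choose m : ℕ) : Polynomial ℤ))
              * ((-X)^(r-(N-m)) * ((r.choose (N-m) : ℕ) : Polynomial ℤ)) else 0) := by
    intro N hN
    rw [Gpoly, mul_pow, h1, h2, Finset.sum_mul_sum, finset_sum_coeff]
    apply Finset.sum_congr rfl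
    intro m hm
    have hmN : m ≤ N := le_trans (by simpa [Nat.lt_succ_iff] using hm) hN
    rw [finset_sum_coeff]
    have hterm : ∀ n, ((C ((-X:Polynomial ℤ)^m * ((r.choose m : ℕ) : Polynomial ℤ)) * X^m)
          * (C ((-X:Polynomial ℤ)^(r-n) * ((r.choose n : ℕ) : Polynomial ℤ)) * X^n)).coeff N
        = if n = N - m then ((-X:Polynomial ℤ)^m * ((r.choose m : ℕ) : Polynomial ℤ))
            * ((-X)^(r-n) * ((r.choose n : ℕ) : Polynomial ℤ)) else 0 := by
      intro n
      have hmm : (C ((-X:Polynomial ℤ)^m * ((r.choose m : ℕ) : Polynomial ℤ)) * X^m)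
          * (C ((-X:Polynomial ℤ)^(r-n) * ((r.choose n : ℕ) : Polynomial ℤ)) * X^n)
          = C (((-X:Polynomial ℤ)^m * ((r.choose m : ℕ) : Polynomial ℤ))
              * ((-X)^(r-n) * ((r.choose n : ℕ) : Polynomial ℤ))) * X^(m+n) := by
        simp only [map_mul, pow_add]; ring
      rw [hmm, coeff_C_mul, coeff_X_pow, mul_ite, mul_one, mul_zero]
      exact if_congr (by omega) rfl rfl
    simp only [hterm]
    rw [Finset.sum_ite_eq' (range (r+1)) (N-m)]
  have hcr : (Gpoly r).coeff r = ∑ m ∈ range (r+1), C ((r.choose m : ℤ)^2) * X^(2*m) := by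
    rw [hcoeff r le_rfl]
    apply Finset.sum_congr rfl
    intro m hm
    have hmr : m ≤ r := by simpa [Nat.lt_succ_iff] using hm
    rw [if_pos (by simp [Nat.lt_succ_iff, Nat.sub_le] : r - m ∈ range (r+1))]
    rw [show r - (r - m) = m from Nat.sub_sub_self hmr, Nat.choose_symm hmr]
    have hxx : ((-X:Polynomial ℤ))^m * ((-X:Polynomial ℤ))^m = X^(2*m) := by
      rw [← pow_add, show m + m = 2*m by ring, pow_mul, neg_sq, ← pow_mul]
    calc ((-X:Polynomial ℤ)^m * ((r.choose m : ℕ) : Polynomial ℤ))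
            * ((-X)^m * ((r.choose m : ℕ) : Polynomial ℤ))
        = ((-X:Polynomial ℤ)^m * (-X)^m) * (((r.choose m : ℕ) : Polynomial ℤ)
            * ((r.choose m : ℕ) : Polynomial ℤ)) := by ring
      _ = C ((r.choose m : ℤ)^2) * X^(2*m) := by
          rw [hxx]
          simp only [map_pow, map_natCast]
          ring
  have hcr1 : (Gpoly r).coeff (r+1)
      = - ∑ n ∈ range r, C ((r.choose n : ℤ) * (r.choose (n+1) : ℤ)) * X^(2*n+1) := by
    rw [hcoeff (r+1) (by omega), Finset.sum_range_succ']
    have h0 : (if r + 1 - 0 ∈ range (r+1) then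
        ((-X:Polynomial ℤ)^0 * ((r.choose 0 : ℕ) : Polynomial ℤ))
          * ((-X)^(r-(r+1-0)) * ((r.choose (r+1-0) : ℕ) : Polynomial ℤ)) else 0) = 0 := by
      rw [if_neg (by simp)]
    rw [h0, add_zero, ← Finset.sum_neg_distrib]
    apply Finset.sum_congr rfl
    intro n hn
    have hnr : n < r := by simpa using hn
    rw [if_pos (by simp only [Finset.mem_range]; omega : r + 1 - (n+1) ∈ range (r+1))]
    rw [show r + 1 - (n + 1) = r - n by omega, show r - (r - n) = n by omega,
      show r.choose (r - n) = r.choose n from Nat.choose_symm (by omega)]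
    have hxx : ((-X:Polynomial ℤ))^(n+1) * ((-X:Polynomial ℤ))^n = - X^(2*n+1) := by
      rw [← pow_add, show n + 1 + n = 2*n+1 by ring, neg_pow,
        Odd.neg_one_pow ⟨n, by ring⟩]
      ring
    calc ((-X:Polynomial ℤ)^(n+1) * ((r.choose (n+1) : ℕ) : Polynomial ℤ))
            * ((-X)^n * ((r.choose n : ℕ) : Polynomial ℤ))
        = ((-X:Polynomial ℤ)^(n+1) * (-X)^n) * (((r.choose (n+1) : ℕ) : Polynomial ℤ)
            * ((r.choose n : ℕ) : Polynomial ℤ)) := by ring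
      _ = -(C ((r.choose n : ℤ) * (r.choose (n+1) : ℤ)) * X^(2*n+1)) := by
          rw [hxx]
          simp only [map_mul, map_natCast]
          ring
  rw [hcr, hcr1, sub_eq_add_neg]

/-- For every `r ≥ 0`, in `ℤ[t]`:
`(1 + t)^r · Σ_{k=0}^{2r} (−1)^k a_k t^k
  = Σ_{k=0}^{r} R_k · C(r,k) · (1 + t³)^{r−k} (t + t²)^k`,
where `a_{2k} = C(r,k)²`, `a_{2k+1} = C(r,k)·C(r,k+1)` and
`R_k = Σ_{i=0}^k (−1)^{k−i} C(k,i) c_i` is the `k`-th Riordan number. -/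
theorem Pr_eq_riordan_expansion (r : ℕ)
    (a : ℕ → ℤ)
    (hbe : ∀ k, a (2 * k) = (r.choose k : ℤ) ^ 2)
    (hbo : ∀ k, a (2 * k + 1) = (r.choose k : ℤ) * (r.choose (k + 1) : ℤ))
    (R : ℕ → ℤ)
    (hR : ∀ k, R k = ∑ i ∈ Finset.range (k + 1),
        (-1) ^ (k - i) * (k.choose i : ℤ) * (catalan i : ℤ)) :
    (1 + Polynomial.X) ^ r *
        ∑ k ∈ Finset.range (2 * r + 1), Polynomial.C ((-1) ^ k * a k) * Polynomial.X ^ k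
      = ∑ k ∈ Finset.range (r + 1),
          Polynomial.C (R k * (r.choose k : ℤ)) *
            (1 + Polynomial.X ^ 3) ^ (r - k) *
            (Polynomial.X + Polynomial.X ^ 2) ^ k := by
  have hM : ∀ k ∈ range (r+1),
      Polynomial.C (R k * (r.choose k : ℤ)) * (1 + Polynomial.X^3)^(r-k)
          * (Polynomial.X + Polynomial.X^2)^k
        = (1 + Polynomial.X)^r
            * (Polynomial.C (R k * (r.choose k:ℤ)) * (1 - X + X^2 : Polynomial ℤ)^(r-k) * X^k) := by
    intro k hk
    have hkr : k ≤ r := by simpa [Nat.lt_succ_iff] using hk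
    have e1 : (1 + X^3 : Polynomial ℤ) = (1+X) * (1 - X + X^2) := by ring
    have e2 : (X + X^2 : Polynomial ℤ) = (1+X) * X := by ring
    have e3 : (1+X:Polynomial ℤ)^(r-k) * (1+X)^k = (1+X)^r := by
      rw [← pow_add, Nat.sub_add_cancel hkr]
    rw [e1, e2, mul_pow, mul_pow, ← e3]
    ring
  rw [Finset.sum_congr rfl hM, ← Finset.mul_sum]
  congr 1
  rw [sum_range_two_mul_add_one (fun k => Polynomial.C ((-1:ℤ)^k * a k) * Polynomial.X^k) r]
  have hev : ∀ m, Polynomial.C ((-1:ℤ)^(2*m) * a (2*m)) * X^(2*m)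
      = Polynomial.C ((r.choose m:ℤ)^2) * X^(2*m) := by
    intro m
    rw [hbe]
    congr 2
    rw [pow_mul]
    simp
  have hod : ∀ n, Polynomial.C ((-1:ℤ)^(2*n+1) * a (2*n+1)) * X^(2*n+1)
      = -(Polynomial.C ((r.choose n:ℤ) * (r.choose (n+1):ℤ)) * X^(2*n+1)) := by
    intro n
    rw [hbo, Odd.neg_one_pow ⟨n, by ring⟩]
    simp only [neg_one_mul, map_neg]
    ring
  rw [Finset.sum_congr rfl (fun m _ => hev m), Finset.sum_congr rfl (fun n _ => hod n),
    Finset.sum_neg_distrib, ← sub_eq_add_neg, ← E1 r, E2 r]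
  apply Finset.sum_congr rfl
  intro k _
  rw [hR k]
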